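/- Within one epoch of local GD with γ ≤ 1/(4LH), the epoch sum of variances satisfies Σ_{t=t_p}^{t_{p+1}−1} V_t ≤ 5Lγ²H² Σ_{i=t_p}^{t_{p+1}−1} (f(x̂_i) − f(x_*)) + 8γ²H²σ² · (t_{p+1} − t_p). -/

import Mathlib

open Finset RealInnerProductSpace

section Helpers

variable {F : Type*} [NormedAddCommGroup F] [InnerProductSpace ℝ F]

private lemma young2' (a b : F) {r : ℝ} (hr : 0 < r) :
    ‖a + b‖ ^ 2 ≤ (1 + r) * ‖a‖ ^ 2 + (1 + 1 / r) * ‖b‖ ^ 2 := by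
  have h := norm_add_sq_real a b
  have h2 := real_inner_le_norm a b
  have hrs : r * (1 / r) = 1 := by field_simp
  nlinarith [sq_nonneg (r * ‖a‖ - ‖b‖), norm_nonneg a, norm_nonneg b]

private lemma young3' (a b c : F) :
    ‖a + b + c‖ ^ 2 ≤ 4 * ‖a‖ ^ 2 + 7 / 4 * ‖b‖ ^ 2 + 28 / 5 * ‖c‖ ^ 2 := by
  have h1 := young2' (a + b) c (show (0:ℝ) < 5/23 by norm_num)
  have h2 := young2' a b (show (0:ℝ) < 16/7 by norm_num)
  have hn : (0:ℝ) ≤ ‖a + b‖ ^ 2 := by positivity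
  nlinarith [sq_nonneg ‖c‖]

private lemma var_le' {M : ℕ} (hM : 0 < M) (y : Fin M → F) (c : F)
    (ybar : F) (hbar : ybar = (1 / (M:ℝ)) • ∑ m, y m) :
    ∑ m, ‖y m - ybar‖ ^ 2 ≤ ∑ m, ‖y m - c‖ ^ 2 := by
  have hM' : (M:ℝ) ≠ 0 := Nat.cast_ne_zero.mpr hM.ne'
  have hsum : ∑ m, (y m - ybar) = 0 := by
    rw [Finset.sum_sub_distrib, Finset.sum_const, hbar]
    simp only [Finset.card_univ, Fintype.card_fin]
    rw [← Nat.cast_smul_eq_nsmul ℝ, smul_smul]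
    field_simp
    rw [one_smul, sub_self]
  have key : ∀ m : Fin M, ‖y m - c‖ ^ 2
      = ‖y m - ybar‖ ^ 2 + 2 * ⟪y m - ybar, ybar - c⟫ + ‖ybar - c‖ ^ 2 := by
    intro m
    have : y m - c = (y m - ybar) + (ybar - c) := by abel
    rw [this, norm_add_sq_real]
  calc ∑ m, ‖y m - ybar‖ ^ 2
      ≤ ∑ m, ‖y m - ybar‖ ^ 2
        + (2 * ⟪∑ m, (y m - ybar), ybar - c⟫ + (M : ℝ) * ‖ybar - c‖ ^ 2) := by
        rw [hsum]; simp; positivity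
    _ = ∑ m, ‖y m - c‖ ^ 2 := by
        simp only [key, Finset.sum_add_distrib, Finset.sum_const, Finset.card_univ,
          Fintype.card_fin, sum_inner, Finset.mul_sum, nsmul_eq_mul]
        ring

private lemma coco' {L : ℝ} (hL : 0 < L) (f : F → ℝ) (g : F → F)
    (hsc : ∀ x y, 0 ≤ f x - f y - ⟪g y, x - y⟫ ∧
      f x - f y - ⟪g y, x - y⟫ ≤ L / 2 * ‖x - y‖ ^ 2)
    (a b : F) : ‖g a - g b‖ ^ 2 ≤ 2 * L * (f a - f b - ⟪g b, a - b⟫) := by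
  set D := g a - g b with hD
  set z := a - (1 / L) • D with hz
  have h1 := (hsc z a).2
  have h2 := (hsc z b).1
  have hza : z - a = -((1 / L) • D) := by rw [hz]; abel
  have hzb : z - b = (a - b) - (1 / L) • D := by rw [hz]; abel
  have e1 : ⟪g a, z - a⟫ = -(1 / L * ⟪g a, D⟫) := by
    rw [hza, inner_neg_right, real_inner_smul_right]
  have e2 : ‖z - a‖ ^ 2 = (1 / L) ^ 2 * ‖D‖ ^ 2 := by
    rw [hza, norm_neg, norm_smul, mul_pow, Real.norm_eq_abs, sq_abs]
  have e3 : ⟪g b, z - b⟫ = ⟪g b, a - b⟫ - 1 / L * ⟪g b, D⟫ := by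
    rw [hzb, inner_sub_right, real_inner_smul_right]
  have e4 : ⟪g a, D⟫ - ⟪g b, D⟫ = ‖D‖ ^ 2 := by
    rw [← inner_sub_left, ← hD, real_inner_self_eq_norm_sq]
  have e5 : 1 / L * ⟪g a, D⟫ - 1 / L * ⟪g b, D⟫ = 1 / L * ‖D‖ ^ 2 := by
    rw [← mul_sub, e4]
  have hkey : 1 / L * ‖D‖ ^ 2 - L / 2 * ((1 / L) ^ 2 * ‖D‖ ^ 2)
      ≤ f a - f b - ⟪g b, a - b⟫ := by
    rw [e1, e2] at h1; rw [e3] at h2; linarith [e5, h1, h2]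
  have hclean : 1 / (2 * L) * ‖D‖ ^ 2 ≤ f a - f b - ⟪g b, a - b⟫ := by
    have he : 1 / L * ‖D‖ ^ 2 - L / 2 * ((1 / L) ^ 2 * ‖D‖ ^ 2)
        = 1 / (2 * L) * ‖D‖ ^ 2 := by field_simp; ring
    linarith [he ▸ hkey]
  calc ‖D‖ ^ 2 = 2 * L * (1 / (2 * L) * ‖D‖ ^ 2) := by field_simp
    _ ≤ 2 * L * (f a - f b - ⟪g b, a - b⟫) :=
        mul_le_mul_of_nonneg_left hclean (by positivity)

private lemma norm_sum_sq_le' {ι : Type*} (s : Finset ι) (v : ι → F) :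
    ‖∑ i ∈ s, v i‖ ^ 2 ≤ (s.card : ℝ) * ∑ i ∈ s, ‖v i‖ ^ 2 := by
  calc ‖∑ i ∈ s, v i‖ ^ 2 ≤ (∑ i ∈ s, ‖v i‖) ^ 2 :=
        pow_le_pow_left₀ (norm_nonneg _) (norm_sum_le _ _) 2
    _ ≤ (s.card : ℝ) * ∑ i ∈ s, ‖v i‖ ^ 2 := sq_sum_le_card_mul_sum_sq

end Helpers

/-- Average of vectors. -/
noncomputable def avgV {d M : ℕ} (x : Fin M → EuclideanSpace ℝ (Fin d)) :
    EuclideanSpace ℝ (Fin d) := (1 / (M : ℝ)) • ∑ m, x m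

/-- Average of reals. -/
noncomputable def avgR {M : ℕ} (a : Fin M → ℝ) : ℝ := (1 / (M : ℝ)) * ∑ m, a m

set_option maxHeartbeats 1000000 in
/-- Lemma 2, first part: Within one epoch of local GD with
`0 < γ ≤ 1/(4LH)`:
`∑_{t=t_p}^{t_{p+1}−1} V_t ≤ 5Lγ²H² ∑_{i=t_p}^{t_{p+1}−1} (f(x̂_i) − f(x⋆))
  + 8γ²H²σ² (t_{p+1} − t_p)`. -/
theorem epoch_variance_sum_bound {d M : ℕ} (hM : 0 < M) (L γ : ℝ)
    (hL : 0 < L)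
    (f : Fin M → EuclideanSpace ℝ (Fin d) → ℝ)
    (g : Fin M → EuclideanSpace ℝ (Fin d) → EuclideanSpace ℝ (Fin d))
    (hsc : ∀ m x y, 0 ≤ f m x - f m y - ⟪g m y, x - y⟫ ∧
      f m x - f m y - ⟪g m y, x - y⟫ ≤ L / 2 * ‖x - y‖ ^ 2)
    (xstar : EuclideanSpace ℝ (Fin d))
    (hmin : ∀ y, avgR (fun m => f m xstar) ≤ avgR (fun m => f m y))
    (x : ℕ → Fin M → EuclideanSpace ℝ (Fin d))
    (tp tp1 H : ℕ) (htp : tp < tp1) (hH1 : 1 ≤ H) (hH : tp1 - tp ≤ H)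
    (hγ0 : 0 < γ) (hγ : γ ≤ 1 / (4 * L * H))
    (hstart : ∀ m, x tp m = avgV (x tp))
    (hstep : ∀ t m, tp ≤ t → t + 1 < tp1 →
      x (t + 1) m = x t m - γ • g m (x t m)) :
    ∑ t ∈ Finset.Ico tp tp1, avgR (fun m => ‖x t m - avgV (x t)‖ ^ 2) ≤
      5 * L * γ ^ 2 * H ^ 2 *
        ∑ i ∈ Finset.Ico tp tp1,
          (avgR (fun m => f m (avgV (x i))) - avgR (fun m => f m xstar))
      + 8 * γ ^ 2 * H ^ 2 * avgR (fun m => ‖g m xstar‖ ^ 2) *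
          ((tp1 - tp : ℕ) : ℝ) := by
  classical
  have hMR : (0:ℝ) < M := Nat.cast_pos.mpr hM
  have hHR : (1:ℝ) ≤ H := by exact_mod_cast hH1
  -- raw (unaveraged) quantities
  set Vs : ℕ → ℝ := fun t => ∑ m, ‖x t m - avgV (x t)‖ ^ 2 with hVs
  set Bs : ℕ → ℝ := fun i => ∑ m, ‖g m (x i m)‖ ^ 2 with hBs
  set Ds : ℕ → ℝ := fun i => (∑ m, f m (avgV (x i))) - ∑ m, f m xstar with hDs
  set sig : ℝ := ∑ m, ‖g m xstar‖ ^ 2 with hsig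
  clear_value Vs Bs Ds sig
  have hVnn : ∀ t, 0 ≤ Vs t := fun t => by
    simp only [hVs]; exact Finset.sum_nonneg (fun m _ => by positivity)
  have hBnn : ∀ i, 0 ≤ Bs i := fun i => by
    simp only [hBs]; exact Finset.sum_nonneg (fun m _ => by positivity)
  have hsignn : 0 ≤ sig := by
    rw [hsig]; exact Finset.sum_nonneg (fun m _ => by positivity)
  -- raw minimality
  have hminraw : ∀ y, (∑ m, f m xstar) ≤ ∑ m, f m y := by
    intro y
    have h := hmin y
    simp only [avgR] at h
    have := mul_le_mul_of_nonneg_left h (le_of_lt hMR)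
    calc (∑ m, f m xstar) = (M:ℝ) * (1 / (M:ℝ) * ∑ m, f m xstar) := by
          field_simp
      _ ≤ (M:ℝ) * (1 / (M:ℝ) * ∑ m, f m y) := this
      _ = ∑ m, f m y := by field_simp
  have hDnn : ∀ i, 0 ≤ Ds i := fun i => by
    simp only [hDs]; exact sub_nonneg.mpr (hminraw _)
  -- sum of gradients at xstar vanishes
  have hGsum : ∑ m, g m xstar = 0 := by
    set G : EuclideanSpace ℝ (Fin d) := ∑ m, g m xstar with hG
    have hup : ∀ y : EuclideanSpace ℝ (Fin d),
        (∑ m, f m y) - (∑ m, f m xstar) - ⟪G, y - xstar⟫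
          ≤ (M:ℝ) * (L / 2 * ‖y - xstar‖ ^ 2) := by
      intro y
      have h := Finset.sum_le_sum
        (fun m (_ : m ∈ Finset.univ) => (hsc m y xstar).2)
      rw [Finset.sum_const, Finset.card_univ, Fintype.card_fin, nsmul_eq_mul] at h
      have hin : ∑ m, ⟪g m xstar, y - xstar⟫ = ⟪G, y - xstar⟫ := by
        rw [hG, sum_inner]
      rw [Finset.sum_sub_distrib, Finset.sum_sub_distrib, hin] at h
      exact h
    set c : ℝ := 1 / ((M:ℝ) * L) with hc
    have hcpos : 0 < c := by rw [hc]; positivity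
    set y0 : EuclideanSpace ℝ (Fin d) := xstar - c • G with hy0
    have hy : y0 - xstar = -(c • G) := by rw [hy0]; abel
    have e1 : ⟪G, y0 - xstar⟫ = -(c * ‖G‖ ^ 2) := by
      rw [hy, inner_neg_right, real_inner_smul_right, real_inner_self_eq_norm_sq]
    have e2 : ‖y0 - xstar‖ ^ 2 = c ^ 2 * ‖G‖ ^ 2 := by
      rw [hy, norm_neg, norm_smul, mul_pow, Real.norm_eq_abs, sq_abs]
    have h1 := hup y0
    rw [e1, e2] at h1
    have h2 := hminraw y0
    have e3 : (M:ℝ) * (L / 2 * (c ^ 2 * ‖G‖ ^ 2)) = c / 2 * ‖G‖ ^ 2 := by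
      rw [hc]; field_simp
    rw [e3] at h1
    have hGz : ‖G‖ ^ 2 ≤ 0 := by nlinarith [h1, h2, hcpos]
    have : ‖G‖ = 0 := by
      have := le_antisymm hGz (by positivity)
      exact pow_eq_zero_iff (two_ne_zero) |>.mp this
    exact norm_eq_zero.mp this
  -- positions within the epoch
  have hA : ∀ t, tp ≤ t → t < tp1 → ∀ m,
      x t m = x tp m - γ • ∑ i ∈ Finset.Ico tp t, g m (x i m) := by
    intro t
    induction t with
    | zero =>
      intro h1 _ m
      have h0 : tp = 0 := Nat.le_zero.mp h1
      subst h0; simp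
    | succ n ih =>
      intro h1 h2 m
      rcases Nat.lt_or_ge n tp with hlt | hge
      · have he : tp = n + 1 := Nat.le_antisymm h1 hlt
        rw [← he]; simp
      · calc x (n + 1) m = x n m - γ • g m (x n m) := hstep n m hge h2
          _ = (x tp m - γ • ∑ i ∈ Finset.Ico tp n, g m (x i m)) - γ • g m (x n m) := by
              nth_rewrite 1 [ih hge (by omega) m]; rfl
          _ = x tp m - γ • ∑ i ∈ Finset.Ico tp (n + 1), g m (x i m) := by
              rw [Finset.sum_Ico_succ_top hge, smul_add]; abel
  -- per-step variance bound
  have hB : ∀ t ∈ Finset.Ico tp tp1,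
      Vs t ≤ γ ^ 2 * H * ∑ i ∈ Finset.Ico tp tp1, Bs i := by
    intro t ht
    obtain ⟨ht1, ht2⟩ := Finset.mem_Ico.mp ht
    have hxt : ∀ m, x t m - avgV (x tp)
        = -(γ • ∑ i ∈ Finset.Ico tp t, g m (x i m)) := by
      intro m
      rw [hA t ht1 ht2 m, hstart m]; abel
    have hHpos : (0:ℝ) < H := lt_of_lt_of_le one_pos hHR
    calc Vs t ≤ ∑ m, ‖x t m - avgV (x tp)‖ ^ 2 := by
          simp only [hVs]
          exact var_le' hM (x t) (avgV (x tp)) (avgV (x t)) rfl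
      _ = ∑ m, γ ^ 2 * ‖∑ i ∈ Finset.Ico tp t, g m (x i m)‖ ^ 2 := by
          refine Finset.sum_congr rfl (fun m _ => ?_)
          rw [hxt m, norm_neg, norm_smul, mul_pow, Real.norm_eq_abs, sq_abs]
      _ ≤ ∑ m, γ ^ 2 * ((H:ℝ) * ∑ i ∈ Finset.Ico tp t, ‖g m (x i m)‖ ^ 2) := by
          refine Finset.sum_le_sum (fun m _ => ?_)
          refine mul_le_mul_of_nonneg_left ?_ (sq_nonneg γ)
          refine (norm_sum_sq_le' _ _).trans ?_
          refine mul_le_mul_of_nonneg_right ?_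
            (Finset.sum_nonneg (fun i _ => by positivity))
          rw [Nat.card_Ico]
          exact_mod_cast (by omega : t - tp ≤ H)
      _ = γ ^ 2 * H * ∑ i ∈ Finset.Ico tp t, Bs i := by
          simp only [hBs, ← mul_assoc]
          rw [← Finset.mul_sum, Finset.sum_comm]
      _ ≤ γ ^ 2 * H * ∑ i ∈ Finset.Ico tp tp1, Bs i := by
          refine mul_le_mul_of_nonneg_left ?_ (by positivity)
          exact Finset.sum_le_sum_of_subset_of_nonneg
            (Finset.Ico_subset_Ico_right ht2.le) (fun i _ _ => hBnn i)
  -- per-step gradient moment bound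
  have hC : ∀ i, Bs i ≤ 4 * L ^ 2 * Vs i + 7 / 2 * L * Ds i + 28 / 5 * sig := by
    intro i
    have pointwise : ∀ m, ‖g m (x i m)‖ ^ 2
        ≤ 4 * ‖g m (x i m) - g m (avgV (x i))‖ ^ 2
          + 7 / 4 * ‖g m (avgV (x i)) - g m xstar‖ ^ 2
          + 28 / 5 * ‖g m xstar‖ ^ 2 := by
      intro m
      have hd : g m (x i m)
          = (g m (x i m) - g m (avgV (x i))) + (g m (avgV (x i)) - g m xstar)
            + g m xstar := by abel
      calc ‖g m (x i m)‖ ^ 2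
          = ‖(g m (x i m) - g m (avgV (x i))) + (g m (avgV (x i)) - g m xstar)
              + g m xstar‖ ^ 2 := by rw [← hd]
        _ ≤ _ := young3' _ _ _
    have t1 : ∀ m, ‖g m (x i m) - g m (avgV (x i))‖ ^ 2
        ≤ L ^ 2 * ‖x i m - avgV (x i)‖ ^ 2 := by
      intro m
      have h := coco' hL (f m) (g m) (hsc m) (x i m) (avgV (x i))
      have h2 := (hsc m (x i m) (avgV (x i))).2
      calc ‖g m (x i m) - g m (avgV (x i))‖ ^ 2
          ≤ 2 * L * (f m (x i m) - f m (avgV (x i))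
              - ⟪g m (avgV (x i)), x i m - avgV (x i)⟫) := h
        _ ≤ 2 * L * (L / 2 * ‖x i m - avgV (x i)‖ ^ 2) :=
            mul_le_mul_of_nonneg_left h2 (by positivity)
        _ = L ^ 2 * ‖x i m - avgV (x i)‖ ^ 2 := by ring
    have t2 : ∑ m, ‖g m (avgV (x i)) - g m xstar‖ ^ 2 ≤ 2 * L * Ds i := by
      have h := Finset.sum_le_sum (fun m (_ : m ∈ Finset.univ) =>
        coco' hL (f m) (g m) (hsc m) (avgV (x i)) xstar)
      have hsum : ∑ m, 2 * L * (f m (avgV (x i)) - f m xstar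
          - ⟪g m xstar, avgV (x i) - xstar⟫) = 2 * L * Ds i := by
        rw [← Finset.mul_sum, Finset.sum_sub_distrib, Finset.sum_sub_distrib,
          ← sum_inner, hGsum, inner_zero_left, hDs]
        norm_num
      rw [hsum] at h
      exact h
    calc Bs i ≤ ∑ m, (4 * ‖g m (x i m) - g m (avgV (x i))‖ ^ 2
          + 7 / 4 * ‖g m (avgV (x i)) - g m xstar‖ ^ 2
          + 28 / 5 * ‖g m xstar‖ ^ 2) := by
          simp only [hBs]
          exact Finset.sum_le_sum (fun m _ => pointwise m)
      _ = 4 * (∑ m, ‖g m (x i m) - g m (avgV (x i))‖ ^ 2)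
          + 7 / 4 * (∑ m, ‖g m (avgV (x i)) - g m xstar‖ ^ 2)
          + 28 / 5 * sig := by
          rw [Finset.sum_add_distrib, Finset.sum_add_distrib, ← Finset.mul_sum,
            ← Finset.mul_sum, ← Finset.mul_sum, hsig]
      _ ≤ 4 * (L ^ 2 * Vs i) + 7 / 4 * (2 * L * Ds i) + 28 / 5 * sig := by
          refine add_le_add (add_le_add ?_ ?_) le_rfl
          · refine mul_le_mul_of_nonneg_left ?_ (by norm_num)
            calc ∑ m, ‖g m (x i m) - g m (avgV (x i))‖ ^ 2
                ≤ ∑ m, L ^ 2 * ‖x i m - avgV (x i)‖ ^ 2 :=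
                  Finset.sum_le_sum (fun m _ => t1 m)
              _ = L ^ 2 * Vs i := by rw [← Finset.mul_sum, hVs]
          · exact mul_le_mul_of_nonneg_left t2 (by norm_num)
      _ = 4 * L ^ 2 * Vs i + 7 / 2 * L * Ds i + 28 / 5 * sig := by ring
  -- combine
  have hHpos : (0:ℝ) < H := lt_of_lt_of_le one_pos hHR
  have hNle : ((tp1 - tp : ℕ) : ℝ) ≤ (H:ℝ) := by exact_mod_cast hH
  have hNnn : (0:ℝ) ≤ ((tp1 - tp : ℕ) : ℝ) := by positivity
  have hBsumnn : 0 ≤ ∑ i ∈ Finset.Ico tp tp1, Bs i :=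
    Finset.sum_nonneg (fun i _ => hBnn i)
  have hSnn : 0 ≤ ∑ t ∈ Finset.Ico tp tp1, Vs t :=
    Finset.sum_nonneg (fun t _ => hVnn t)
  have hTnn : 0 ≤ ∑ i ∈ Finset.Ico tp tp1, Ds i :=
    Finset.sum_nonneg (fun i _ => hDnn i)
  have hsum1 : ∑ t ∈ Finset.Ico tp tp1, Vs t
      ≤ γ ^ 2 * (H:ℝ) ^ 2 * ∑ i ∈ Finset.Ico tp tp1, Bs i := by
    calc ∑ t ∈ Finset.Ico tp tp1, Vs t
        ≤ ∑ _t ∈ Finset.Ico tp tp1, (γ ^ 2 * H * ∑ i ∈ Finset.Ico tp tp1, Bs i) :=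
          Finset.sum_le_sum hB
      _ = ((tp1 - tp : ℕ) : ℝ) * (γ ^ 2 * H * ∑ i ∈ Finset.Ico tp tp1, Bs i) := by
          rw [Finset.sum_const, Nat.card_Ico, nsmul_eq_mul]
      _ ≤ (H:ℝ) * (γ ^ 2 * H * ∑ i ∈ Finset.Ico tp tp1, Bs i) :=
          mul_le_mul_of_nonneg_right hNle
            (mul_nonneg (mul_nonneg (sq_nonneg γ) (Nat.cast_nonneg H)) hBsumnn)
      _ = γ ^ 2 * (H:ℝ) ^ 2 * ∑ i ∈ Finset.Ico tp tp1, Bs i := by ring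
  have hsum2 : ∑ i ∈ Finset.Ico tp tp1, Bs i
      ≤ 4 * L ^ 2 * (∑ t ∈ Finset.Ico tp tp1, Vs t)
        + 7 / 2 * L * (∑ i ∈ Finset.Ico tp tp1, Ds i)
        + 28 / 5 * sig * ((tp1 - tp : ℕ) : ℝ) := by
    calc ∑ i ∈ Finset.Ico tp tp1, Bs i
        ≤ ∑ i ∈ Finset.Ico tp tp1,
            (4 * L ^ 2 * Vs i + 7 / 2 * L * Ds i + 28 / 5 * sig) :=
          Finset.sum_le_sum (fun i _ => hC i)
      _ = 4 * L ^ 2 * (∑ t ∈ Finset.Ico tp tp1, Vs t)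
          + 7 / 2 * L * (∑ i ∈ Finset.Ico tp tp1, Ds i)
          + 28 / 5 * sig * ((tp1 - tp : ℕ) : ℝ) := by
          rw [Finset.sum_add_distrib, Finset.sum_add_distrib, ← Finset.mul_sum,
            ← Finset.mul_sum, Finset.sum_const, Nat.card_Ico, nsmul_eq_mul]
          ring
  have hq : γ * (4 * L * (H:ℝ)) ≤ 1 := by
    have hpos : (0:ℝ) < 4 * L * (H:ℝ) := by positivity
    exact (le_div_iff₀ hpos).mp hγ
  have hsq : γ ^ 2 * L ^ 2 * (H:ℝ) ^ 2 ≤ 1 / 16 := by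
    nlinarith [hq, mul_nonneg hγ0.le (by positivity : (0:ℝ) ≤ 4 * L * (H:ℝ))]
  have raw : ∑ t ∈ Finset.Ico tp tp1, Vs t
      ≤ 5 * L * γ ^ 2 * (H:ℝ) ^ 2 * (∑ i ∈ Finset.Ico tp tp1, Ds i)
        + 8 * γ ^ 2 * (H:ℝ) ^ 2 * sig * ((tp1 - tp : ℕ) : ℝ) := by
    have key := hsum1.trans (mul_le_mul_of_nonneg_left hsum2
      (mul_nonneg (sq_nonneg γ) (sq_nonneg _)))
    have h16 := mul_le_mul_of_nonneg_right hsq hSnn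
    have hA2 : 0 ≤ L * (γ ^ 2 * ((H:ℝ) ^ 2 * (∑ i ∈ Finset.Ico tp tp1, Ds i))) :=
      mul_nonneg hL.le (mul_nonneg (sq_nonneg γ) (mul_nonneg (sq_nonneg _) hTnn))
    have hA3 : 0 ≤ γ ^ 2 * ((H:ℝ) ^ 2 * (sig * ((tp1 - tp : ℕ) : ℝ))) :=
      mul_nonneg (sq_nonneg γ) (mul_nonneg (sq_nonneg _) (mul_nonneg hsignn hNnn))
    linarith [key, h16, hA2, hA3]
  -- convert the goal from averages to raw sums
  have hinv : (0:ℝ) ≤ 1 / (M:ℝ) := by positivity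
  have e1 : ∑ t ∈ Finset.Ico tp tp1, avgR (fun m => ‖x t m - avgV (x t)‖ ^ 2)
      = 1 / (M:ℝ) * ∑ t ∈ Finset.Ico tp tp1, Vs t := by
    rw [Finset.mul_sum]
    exact Finset.sum_congr rfl (fun t _ => by rw [hVs]; rfl)
  have e2 : ∑ i ∈ Finset.Ico tp tp1,
      (avgR (fun m => f m (avgV (x i))) - avgR (fun m => f m xstar))
      = 1 / (M:ℝ) * ∑ i ∈ Finset.Ico tp tp1, Ds i := by
    rw [Finset.mul_sum]
    refine Finset.sum_congr rfl (fun i _ => ?_)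
    simp only [hDs, avgR]
    ring
  have e3 : avgR (fun m => ‖g m xstar‖ ^ 2) = 1 / (M:ℝ) * sig := by
    rw [hsig]; rfl
  rw [e1, e2, e3]
  have := mul_le_mul_of_nonneg_left raw hinv
  nlinarith [this]
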